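/- Let A = A₁ + iA₂ be a normal n×n complex matrix (Cartesian decomposition) such that −A₂ ≤ A₁ in the Loewner order. Then for every index j, s_j(A) ≤ s_j( 2(A₁⁺ + A₂⁺) ⊕ (A₁ + A₂) ), where the right-hand matrix is the 2n×2n block diagonal matrix with diagonal blocks 2(A₁⁺ + A₂⁺) and A₁ + A₂. -/

import Mathlib

set_option maxHeartbeats 1600000

open Matrix
open scoped ComplexOrder

/-- `singularValues X j` is the `(j+1)`-th largest singular value of `X`, i.e. the
decreasingly ordered square roots of the eigenvalues of `Xᴴ * X`. -/
noncomputable def singularValues {m : ℕ} (X : Matrix (Fin m) (Fin m) ℂ) : Fin m → ℝ :=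
  fun j => Real.sqrt
    ((Matrix.isHermitian_conjTranspose_mul_self X).eigenvalues
      (Tuple.sort (Matrix.isHermitian_conjTranspose_mul_self X).eigenvalues j.rev))

/-- `matAbs X = |X|` is the positive semidefinite square root of `Xᴴ * X`. -/
noncomputable def matAbs {m : ℕ} (X : Matrix (Fin m) (Fin m) ℂ) : Matrix (Fin m) (Fin m) ℂ :=
  (Matrix.posSemidef_conjTranspose_mul_self X).1.eigenvectorUnitary.1 *
    diagonal ((↑) ∘ Real.sqrt ∘ (Matrix.posSemidef_conjTranspose_mul_self X).1.eigenvalues) *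
    (star (Matrix.posSemidef_conjTranspose_mul_self X).1.eigenvectorUnitary : Matrix (Fin m) (Fin m) ℂ)

/-- `dsum X Y = X ⊕ Y` is the block diagonal matrix with diagonal blocks `X` and `Y`. -/
noncomputable def dsum {m : ℕ} (X Y : Matrix (Fin m) (Fin m) ℂ) :
    Matrix (Fin (m + m)) (Fin (m + m)) ℂ :=
  Matrix.reindex finSumFinEquiv finSumFinEquiv (Matrix.fromBlocks X 0 0 Y)

/-- `matPosPart X = X⁺ = (|X| + X)/2`. -/
noncomputable def matPosPart {m : ℕ} (X : Matrix (Fin m) (Fin m) ℂ) : Matrix (Fin m) (Fin m) ℂ :=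
  (2 : ℂ)⁻¹ • (matAbs X + X)

/-- `matNegPart X = X⁻ = (|X| - X)/2`. -/
noncomputable def matNegPart {m : ℕ} (X : Matrix (Fin m) (Fin m) ℂ) : Matrix (Fin m) (Fin m) ℂ :=
  (2 : ℂ)⁻¹ • (matAbs X - X)

namespace SV

/-! ### Counting lemmas for sorted tuples -/

/-- Number of entries of `f` that are `≥ a`. -/
noncomputable def nge {M : ℕ} (f : Fin M → ℝ) (a : ℝ) : ℕ :=
  Fintype.card {i // a ≤ f i}

/-- Characterization of the `j`-th largest entry via counting. -/
lemma le_sort_rev_iff {M : ℕ} (f : Fin M → ℝ) (j : Fin M) (a : ℝ) :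
    a ≤ f (Tuple.sort f j.rev) ↔ (j : ℕ) < nge f a := by
  classical
  have hmono : Monotone (f ∘ Tuple.sort f) := Tuple.monotone_sort f
  have hanti : Antitone ((f ∘ Tuple.sort f) ∘ Fin.rev) :=
    hmono.comp_antitone fun i k h => Fin.rev_le_rev.mpr h
  have h := Tuple.lt_card_ge_iff_apply_ge_of_antitone (f := (f ∘ Tuple.sort f) ∘ Fin.rev) (a := a) (j := j) hanti
  rw [← Fintype.card_subtype] at h
  have hcard : Fintype.card {i // a ≤ ((f ∘ Tuple.sort f) ∘ Fin.rev) i} = nge f a := by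
    apply Fintype.card_congr
    exact Equiv.subtypeEquiv ((Fin.revPerm).trans (Tuple.sort f)) (fun i => by
      simp [Fin.revPerm])
  rw [hcard] at h
  exact h.symm

lemma nge_eq_countP {M : ℕ} (f : Fin M → ℝ) (a : ℝ) :
    nge f a = Multiset.countP (fun x => a ≤ x) (Finset.univ.val.map f) := by
  classical
  rw [Multiset.countP_map, nge, Fintype.card_subtype]
  rfl

lemma nge_eq_of_multiset_eq {M : ℕ} (f g : Fin M → ℝ)
    (h : Finset.univ.val.map f = Finset.univ.val.map g) (a : ℝ) : nge f a = nge g a := by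
  rw [nge_eq_countP, nge_eq_countP, h]

lemma nge_mono_pointwise {M : ℕ} (f g : Fin M → ℝ) (h : ∀ i, f i ≤ g i) (a : ℝ) :
    nge f a ≤ nge g a := by
  apply Fintype.card_le_of_injective (fun x => ⟨x.1, le_trans x.2 (h x.1)⟩)
  intro x y hxy
  have h0 := congrArg Subtype.val hxy
  have h1 : (x : Fin M) = (y : Fin M) := h0
  ext
  exact congrArg Fin.val h1

lemma nge_le_of_embed {M M' : ℕ} (f : Fin M → ℝ) (g : Fin M' → ℝ) (e : Fin M → Fin M')
    (he : Function.Injective e) (hfg : ∀ i, g (e i) = f i) (a : ℝ) :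
    nge f a ≤ nge g a := by
  apply Fintype.card_le_of_injective (fun x => ⟨e x.1, (hfg x.1).symm ▸ x.2⟩)
  intro x y hxy
  have h0 := congrArg Subtype.val hxy
  have h1 : e (x : Fin M) = e (y : Fin M) := h0
  ext
  exact congrArg Fin.val (he h1)

/-! ### Eigenvalue multisets via characteristic polynomials -/

open Polynomial in
lemma charpoly_mul_conj {m : ℕ} (U D V : Matrix (Fin m) (Fin m) ℂ) (hUV : U * V = 1) :
    (U * D * V).charpoly = D.charpoly := by
  have hmap : ∀ (X Y : Matrix (Fin m) (Fin m) ℂ),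
      (X * Y).map (C : ℂ →+* ℂ[X]) = X.map C * Y.map C := fun X Y =>
    Matrix.map_mul
  have hc : charmatrix (U * D * V) = U.map C * charmatrix D * V.map C := by
    unfold charmatrix
    rw [Matrix.mul_sub, Matrix.sub_mul]
    congr 1
    · rw [mul_assoc]
      rw [Matrix.scalar_commute (X : ℂ[X]) (fun r => (Commute.all _ _)) (V.map C)]
      rw [← mul_assoc, ← hmap, hUV]
      simp
    · simp only [RingHom.mapMatrix_apply]
      rw [← hmap, ← hmap]
  rw [Matrix.charpoly, Matrix.charpoly, hc, det_mul, det_mul]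
  have h1 : det (U.map C) * det (V.map C) = 1 := by
    rw [← det_mul, ← hmap, hUV]; simp
  calc det (U.map C) * det (charmatrix D) * det (V.map C)
      = det (charmatrix D) * (det (U.map C) * det (V.map C)) := by ring
    _ = det (charmatrix D) := by rw [h1, mul_one]

open Polynomial in
lemma charpoly_diagonal {m : ℕ} (v : Fin m → ℂ) :
    (diagonal v).charpoly = ∏ i, (X - C (v i)) := by
  have h : charmatrix (diagonal v) = diagonal (fun i => (X : ℂ[X]) - C (v i)) := by
    ext i j
    by_cases h : i = j
    · subst h; simp
    · simp [charmatrix_apply_ne _ _ _ h, diagonal_apply_ne _ h]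
  rw [Matrix.charpoly, h, det_diagonal]

open Polynomial in
lemma roots_charpoly_diagonal {m : ℕ} (v : Fin m → ℂ) :
    (diagonal v).charpoly.roots = Finset.univ.val.map v := by
  rw [charpoly_diagonal]
  have h : ∏ i, (X - C (v i)) = ((Finset.univ.val.map v).map fun a => X - C a).prod := by
    rw [Multiset.map_map]; rfl
  rw [h, roots_multiset_prod_X_sub_C]

/-- The eigenvalue multiset of a Hermitian matrix is determined by any unitary
diagonalization. -/
lemma eigenvalues_multiset_eq {m : ℕ} {H : Matrix (Fin m) (Fin m) ℂ} (hH : H.IsHermitian)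
    (u : Matrix (Fin m) (Fin m) ℂ) (hu : u ∈ Matrix.unitaryGroup (Fin m) ℂ)
    (d : Fin m → ℝ) (hdiag : H = u * diagonal (fun i => (d i : ℂ)) * star u) :
    Finset.univ.val.map hH.eigenvalues = Finset.univ.val.map d := by
  have h1 : H.charpoly = (diagonal (fun i => (d i : ℂ))).charpoly := by
    rw [hdiag]
    exact charpoly_mul_conj _ _ _ (Matrix.mem_unitaryGroup_iff.mp hu)
  have h2 : H.charpoly = (diagonal (fun i => (hH.eigenvalues i : ℂ))).charpoly := by
    conv_lhs => rw [hH.spectral_theorem, Unitary.conjStarAlgAut_apply]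
    exact charpoly_mul_conj _ _ _
      (Matrix.mem_unitaryGroup_iff.mp hH.eigenvectorUnitary.2)
  have h3 := h2.symm.trans h1
  have hroots := congrArg Polynomial.roots h3
  rw [roots_charpoly_diagonal, roots_charpoly_diagonal] at hroots
  apply Multiset.map_injective (f := (Complex.ofReal : ℝ → ℂ)) Complex.ofReal_injective
  rw [Multiset.map_map, Multiset.map_map]
  exact hroots

/-! ### Simultaneous diagonalization of commuting Hermitian matrices -/

open Module.End in
/-- The unitary matrix whose columns are the vectors of an orthonormal basis. -/
noncomputable def obUnitary {n : ℕ} (b : OrthonormalBasis (Fin n) ℂ (EuclideanSpace ℂ (Fin n))) :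
    Matrix.unitaryGroup (Fin n) ℂ :=
  ⟨(EuclideanSpace.basisFun (Fin n) ℂ).toBasis.toMatrix b.toBasis,
    (EuclideanSpace.basisFun (Fin n) ℂ).toMatrix_orthonormalBasis_mem_unitary b⟩

theorem obUnitary_mulVec {n : ℕ} (b : OrthonormalBasis (Fin n) ℂ (EuclideanSpace ℂ (Fin n)))
    (j : Fin n) : (obUnitary b : Matrix (Fin n) (Fin n) ℂ) *ᵥ Pi.single j 1 = ⇑(b j) := by
  have : ∀ i, (obUnitary b : Matrix (Fin n) (Fin n) ℂ) i j = ⇑(b j) i := fun i => rfl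
  funext i
  simp only [mulVec_single_one]
  exact this i

theorem star_obUnitary_mulVec {n : ℕ}
    (b : OrthonormalBasis (Fin n) ℂ (EuclideanSpace ℂ (Fin n))) (j : Fin n) :
    (star (obUnitary b : Matrix (Fin n) (Fin n) ℂ)) *ᵥ ⇑(b j) = Pi.single j 1 := by
  rw [← obUnitary_mulVec, mulVec_mulVec, Unitary.coe_star_mul_self, one_mulVec]

/-- If `b` is an orthonormal basis of eigenvectors of `M` with real eigenvalues `μ`, then
`M` is the corresponding unitary conjugate of `diagonal μ`. -/
theorem diag_of_eigenbasis {n : ℕ} (M : Matrix (Fin n) (Fin n) ℂ)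
    (b : OrthonormalBasis (Fin n) ℂ (EuclideanSpace ℂ (Fin n))) (μ : Fin n → ℝ)
    (h : ∀ j, M *ᵥ ⇑(b j) = (μ j : ℂ) • ⇑(b j)) :
    M = (obUnitary b : Matrix (Fin n) (Fin n) ℂ) * diagonal (Complex.ofReal ∘ μ) *
      (star (obUnitary b : Matrix (Fin n) (Fin n) ℂ)) := by
  have key : (star (obUnitary b : Matrix (Fin n) (Fin n) ℂ)) * M *
      (obUnitary b : Matrix (Fin n) (Fin n) ℂ) = diagonal (Complex.ofReal ∘ μ) := by
    apply Matrix.toEuclideanLin.injective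
    apply Module.Basis.ext (EuclideanSpace.basisFun (Fin n) ℂ).toBasis
    intro i
    have hs : (EuclideanSpace.single i (1 : ℂ)).ofLp = Pi.single i 1 := rfl
    simp only [toEuclideanLin_apply, OrthonormalBasis.coe_toBasis, EuclideanSpace.basisFun_apply,
      hs, ← mulVec_mulVec, obUnitary_mulVec, h,
      Matrix.diagonal_mulVec_single, mulVec_smul, star_obUnitary_mulVec,
      Function.comp_apply, mul_one]
    apply PiLp.ext
    intro j
    simp only [PiLp.toLp_apply, Pi.smul_apply, Pi.single_apply, smul_eq_mul, mul_ite, mul_one,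
      mul_zero]
  rw [← key, mul_assoc, mul_assoc,
    (Matrix.mem_unitaryGroup_iff).mp (obUnitary b).2, mul_one,
    ← mul_assoc, (Matrix.mem_unitaryGroup_iff).mp (obUnitary b).2, one_mul]

open Module.End in
/-- Simultaneous unitary diagonalization of two commuting Hermitian matrices. -/
theorem simul_diag {n : ℕ} {A₁ A₂ : Matrix (Fin n) (Fin n) ℂ} (h1 : A₁.IsHermitian)
    (h2 : A₂.IsHermitian) (hc : A₁ * A₂ = A₂ * A₁) :
    ∃ (U : Matrix.unitaryGroup (Fin n) ℂ) (a b : Fin n → ℝ),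
      A₁ = (U : Matrix (Fin n) (Fin n) ℂ) * diagonal (Complex.ofReal ∘ a) *
        (star (U : Matrix (Fin n) (Fin n) ℂ)) ∧
      A₂ = (U : Matrix (Fin n) (Fin n) ℂ) * diagonal (Complex.ofReal ∘ b) *
        (star (U : Matrix (Fin n) (Fin n) ℂ)) := by
  classical
  set T₁ := Matrix.toEuclideanLin A₁ with hT₁
  set T₂ := Matrix.toEuclideanLin A₂ with hT₂
  have hS1 : T₁.IsSymmetric := isHermitian_iff_isSymmetric.mp h1
  have hS2 : T₂.IsSymmetric := isHermitian_iff_isSymmetric.mp h2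
  have hcomm : Commute T₁ T₂ := by
    have h : Matrix.toEuclideanLin (A₁ * A₂) = Matrix.toEuclideanLin (A₂ * A₁) := by rw [hc]
    simp only [toEuclideanLin_eq_toLin, Matrix.toLin_mul _ (PiLp.basisFun 2 ℂ (Fin n)) _] at h
    exact h
  have internal := hS1.directSum_isInternal_of_commute hS2 hcomm
  set V : ℂ × ℂ → Submodule ℂ (EuclideanSpace ℂ (Fin n)) :=
    fun i => eigenspace T₁ i.2 ⊓ eigenspace T₂ i.1 with hV
  have internal' : DirectSum.IsInternal (fun i : {i : ℂ × ℂ // V i ≠ ⊥} => V i.1) :=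
    DirectSum.isInternal_ne_bot_iff.mpr internal
  have hindep : iSupIndep V :=
    ((DirectSum.isInternal_submodule_iff_iSupIndep_and_iSup_eq_top V).mp internal).1
  haveI : Finite {i : ℂ × ℂ // V i ≠ ⊥} :=
    (WellFoundedGT.finite_ne_bot_of_iSupIndep hindep).to_subtype
  haveI : Fintype {i : ℂ × ℂ // V i ≠ ⊥} := Fintype.ofFinite _
  have fam0 := LinearMap.IsSymmetric.orthogonalFamily_eigenspace_inf_eigenspace hS1 hS2
  have fam := fam0.comp
    (Subtype.val_injective : Function.Injective ((↑) : {i : ℂ × ℂ // V i ≠ ⊥} → ℂ × ℂ))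
  have hn : Module.finrank ℂ (EuclideanSpace ℂ (Fin n)) = n := by simp
  set bas := internal'.subordinateOrthonormalBasis hn fam with hbas
  set idx : Fin n → ℂ × ℂ :=
    fun k => (internal'.subordinateOrthonormalBasisIndex hn k fam : {i : ℂ × ℂ // V i ≠ ⊥}).1
  have hmem : ∀ k, bas k ∈ eigenspace T₁ (idx k).2 ⊓ eigenspace T₂ (idx k).1 :=
    fun k => internal'.subordinateOrthonormalBasis_subordinate hn k fam
  have hne : ∀ k, bas k ≠ 0 := fun k => bas.toBasis.ne_zero k
  have hev1 : ∀ k, T₁ (bas k) = (idx k).2 • bas k :=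
    fun k => mem_eigenspace_iff.mp (hmem k).1
  have hev2 : ∀ k, T₂ (bas k) = (idx k).1 • bas k :=
    fun k => mem_eigenspace_iff.mp (hmem k).2
  have hreal1 : ∀ k, ((((idx k).2).re : ℂ)) = (idx k).2 := by
    intro k
    rw [← Complex.conj_eq_iff_re]
    exact hS1.conj_eigenvalue_eq_self
      (hasEigenvalue_of_hasEigenvector ⟨(hmem k).1, hne k⟩)
  have hreal2 : ∀ k, ((((idx k).1).re : ℂ)) = (idx k).1 := by
    intro k
    rw [← Complex.conj_eq_iff_re]
    exact hS2.conj_eigenvalue_eq_self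
      (hasEigenvalue_of_hasEigenvector ⟨(hmem k).2, hne k⟩)
  have hmv : ∀ (B : Matrix (Fin n) (Fin n) ℂ) (c : ℂ) (k : Fin n),
      Matrix.toEuclideanLin B (bas k) = c • bas k → B *ᵥ ⇑(bas k) = c • ⇑(bas k) := by
    intro B c k hk
    have h := congrArg (WithLp.equiv 2 (Fin n → ℂ)) hk
    exact h
  refine ⟨obUnitary bas, fun k => ((idx k).2).re, fun k => ((idx k).1).re, ?_, ?_⟩
  · exact diag_of_eigenbasis A₁ bas _ (fun k => hmv A₁ _ k (by rw [← hT₁, hev1 k, hreal1 k]))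
  · exact diag_of_eigenbasis A₂ bas _ (fun k => hmv A₂ _ k (by rw [← hT₂, hev2 k, hreal2 k]))

/-! ### Unitary conjugates of diagonal matrices -/

/-- Unitary conjugation of a diagonal matrix. -/
noncomputable def zconj {m : ℕ} (u : Matrix (Fin m) (Fin m) ℂ) (v : Fin m → ℂ) :
    Matrix (Fin m) (Fin m) ℂ :=
  u * diagonal v * star u

section zconj

variable {m : ℕ} (u : Matrix (Fin m) (Fin m) ℂ)

lemma zconj_add (v w : Fin m → ℂ) : zconj u v + zconj u w = zconj u (v + w) := by
  unfold zconj
  rw [← Matrix.add_mul, ← Matrix.mul_add, diagonal_add]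
  rfl

lemma zconj_smul (c : ℂ) (v : Fin m → ℂ) : c • zconj u v = zconj u (c • v) := by
  simp [zconj, diagonal_smul, Matrix.mul_smul, Matrix.smul_mul]

lemma zconj_star (v : Fin m → ℂ) : (zconj u v)ᴴ = zconj u (star v) := by
  simp [zconj, Matrix.conjTranspose_mul, diagonal_conjTranspose, star_eq_conjTranspose,
    conjTranspose_conjTranspose, Matrix.mul_assoc]

variable (hu : u ∈ Matrix.unitaryGroup (Fin m) ℂ)
include hu

lemma zconj_mul (v w : Fin m → ℂ) : zconj u v * zconj u w = zconj u (v * w) := by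
  have h2 : star u * u = 1 := Matrix.mem_unitaryGroup_iff'.mp hu
  calc u * diagonal v * star u * (u * diagonal w * star u)
      = u * diagonal v * (star u * u) * diagonal w * star u := by
        simp only [Matrix.mul_assoc]
    _ = u * (diagonal v * diagonal w) * star u := by rw [h2]; simp only [Matrix.mul_one,
        Matrix.mul_assoc]
    _ = zconj u (v * w) := by rw [diagonal_mul_diagonal]; rfl

lemma zconj_one : zconj u 1 = 1 := by
  unfold zconj
  rw [show (diagonal (1 : Fin m → ℂ)) = 1 from diagonal_one, Matrix.mul_one]
  exact Matrix.mem_unitaryGroup_iff.mp hu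

lemma zconj_pow (v : Fin m → ℂ) (k : ℕ) : zconj u v ^ k = zconj u (v ^ k) := by
  induction k with
  | zero => rw [pow_zero, pow_zero, zconj_one u hu]
  | succ k ih => rw [pow_succ, pow_succ, ih, zconj_mul u hu]

lemma zconj_aeval (p : Polynomial ℂ) (v : Fin m → ℂ) :
    Polynomial.aeval (zconj u v) p = zconj u (fun i => p.eval (v i)) := by
  induction p using Polynomial.induction_on' with
  | add p q hp hq =>
    rw [map_add, hp, hq, zconj_add]
    congr 1
    funext i
    simp [Polynomial.eval_add]
  | monomial k a =>
    rw [Polynomial.aeval_monomial, zconj_pow u hu, ← Algebra.smul_def, zconj_smul]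
    congr 1
    funext i
    simp [Polynomial.eval_monomial]

lemma zconj_posSemidef_iff (v : Fin m → ℂ) : (zconj u v).PosSemidef ↔ ∀ i, 0 ≤ v i := by
  constructor
  · intro h
    have h2 : star u * u = 1 := Matrix.mem_unitaryGroup_iff'.mp hu
    have hps := h.mul_mul_conjTranspose_same (star u)
    have hd : star u * zconj u v * (star u)ᴴ = diagonal v := by
      rw [star_eq_conjTranspose, conjTranspose_conjTranspose, ← star_eq_conjTranspose, zconj]
      calc star u * (u * diagonal v * star u) * u
          = (star u * u) * diagonal v * (star u * u) := by simp only [Matrix.mul_assoc]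
        _ = diagonal v := by rw [h2]; simp
    rw [hd] at hps
    exact posSemidef_diagonal_iff.mp hps
  · intro h
    exact (posSemidef_diagonal_iff.mpr h).mul_mul_conjTranspose_same u

lemma zconj_matAbs (d : Fin m → ℝ) :
    matAbs (zconj u (fun i => (d i : ℂ))) = zconj u (fun i => ((|d i| : ℝ) : ℂ)) := by
  have hsq : (zconj u (fun i => ((|d i| : ℝ) : ℂ))) ^ 2
      = (zconj u (fun i => (d i : ℂ)))ᴴ * zconj u (fun i => (d i : ℂ)) := by
    rw [pow_two, zconj_mul u hu, zconj_star, zconj_mul u hu]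
    have harg : ((fun i => ((|d i| : ℝ) : ℂ)) * fun i => ((|d i| : ℝ) : ℂ))
        = ((star fun i => ((d i : ℝ) : ℂ)) * fun i => ((d i : ℝ) : ℂ)) := by
      funext i
      simp only [Pi.mul_apply, Pi.star_apply, Complex.star_def, Complex.conj_ofReal]
      norm_cast
      rw [← abs_mul, abs_mul_self]
    rw [harg]
  have hpsd : (zconj u (fun i => ((|d i| : ℝ) : ℂ))).PosSemidef :=
    (zconj_posSemidef_iff u hu _).mpr fun i => by
      rw [Complex.zero_le_real]; exact abs_nonneg _
  classical
  have hsq' : (zconj u (fun i => (d i : ℂ)))ᴴ * zconj u (fun i => (d i : ℂ))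
      = zconj u (fun i => ((|d i| * |d i| : ℝ) : ℂ)) := by
    rw [← hsq, pow_two, zconj_mul u hu]
    congr 1
    funext i
    push_cast
    rfl
  let H := (Matrix.posSemidef_conjTranspose_mul_self (zconj u (fun i => (d i : ℂ)))).1
  let V : Matrix (Fin m) (Fin m) ℂ := H.eigenvectorUnitary
  have hV : V ∈ Matrix.unitaryGroup (Fin m) ℂ := H.eigenvectorUnitary.2
  have hspec : (zconj u (fun i => (d i : ℂ)))ᴴ * zconj u (fun i => (d i : ℂ))
      = zconj V (fun i => ((H.eigenvalues i : ℝ) : ℂ)) := by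
    have := H.spectral_theorem
    rw [Unitary.conjStarAlgAut_apply] at this
    exact this
  let S : Finset ℂ := Finset.univ.image (fun i => ((H.eigenvalues i : ℝ) : ℂ)) ∪
    Finset.univ.image (fun i => ((|d i| * |d i| : ℝ) : ℂ))
  let r : ℂ → ℂ := fun z => ((Real.sqrt z.re : ℝ) : ℂ)
  let p := Lagrange.interpolate S id r
  have hp : ∀ z ∈ S, p.eval z = r z := fun z hz =>
    Lagrange.eval_interpolate_at_node r (Set.injOn_id _) hz
  have hA : matAbs (zconj u fun i => (d i : ℂ))
      = zconj V (fun i => ((Real.sqrt (H.eigenvalues i) : ℝ) : ℂ)) := rfl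
  rw [hA]
  have e1 : zconj V (fun i => ((Real.sqrt (H.eigenvalues i) : ℝ) : ℂ))
      = zconj V (fun i => p.eval ((H.eigenvalues i : ℝ) : ℂ)) := by
    congr 1
    funext i
    rw [hp _ (Finset.mem_union_left _ (Finset.mem_image_of_mem _ (Finset.mem_univ i)))]
    simp only [r, Complex.ofReal_re]
  have e2 : zconj u (fun i => ((|d i| : ℝ) : ℂ))
      = zconj u (fun i => p.eval ((|d i| * |d i| : ℝ) : ℂ)) := by
    congr 1
    funext i
    rw [hp _ (Finset.mem_union_right _ (Finset.mem_image_of_mem _ (Finset.mem_univ i)))]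
    simp only [r, Complex.ofReal_re, Real.sqrt_mul_self (abs_nonneg _)]
  rw [e1, e2, ← zconj_aeval V hV, ← zconj_aeval u hu, ← hspec, hsq']

lemma zconj_matPosPart (d : Fin m → ℝ) :
    matPosPart (zconj u (fun i => (d i : ℂ)))
      = zconj u (fun i => (((|d i| + d i) / 2 : ℝ) : ℂ)) := by
  rw [matPosPart, zconj_matAbs u hu, zconj_add, zconj_smul]
  have harg : (2 : ℂ)⁻¹ • ((fun i => ((|d i| : ℝ) : ℂ)) + fun i => ((d i : ℝ) : ℂ))
      = fun i => (((|d i| + d i) / 2 : ℝ) : ℂ) := by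
    funext i
    simp only [Pi.smul_apply, Pi.add_apply, smul_eq_mul]
    push_cast
    ring
  rw [harg]

end zconj

/-! ### Block diagonal sums -/

section bigU

variable {m : ℕ} (u : Matrix (Fin m) (Fin m) ℂ)

/-- The block diagonal unitary `u ⊕ u`. -/
noncomputable def bigU : Matrix (Fin (m + m)) (Fin (m + m)) ℂ :=
  Matrix.reindex finSumFinEquiv finSumFinEquiv (Matrix.fromBlocks u 0 0 u)

lemma reindex_mul (X Y : Matrix (Fin m ⊕ Fin m) (Fin m ⊕ Fin m) ℂ) :
    Matrix.reindex finSumFinEquiv finSumFinEquiv X * Matrix.reindex finSumFinEquiv finSumFinEquiv Y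
      = Matrix.reindex finSumFinEquiv finSumFinEquiv (X * Y) := by
  simp only [reindex_apply]
  rw [show (finSumFinEquiv.symm : Fin (m+m) → Fin m ⊕ Fin m)
    = ((finSumFinEquiv.symm : Fin (m+m) ≃ Fin m ⊕ Fin m) : Fin (m+m) → Fin m ⊕ Fin m) from rfl,
    submatrix_mul_equiv]

lemma star_reindex (X : Matrix (Fin m ⊕ Fin m) (Fin m ⊕ Fin m) ℂ) :
    star (Matrix.reindex finSumFinEquiv finSumFinEquiv X)
      = Matrix.reindex finSumFinEquiv finSumFinEquiv (star X) := by
  simp only [star_eq_conjTranspose, conjTranspose_reindex]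

lemma reindex_diagonal (v : Fin (m + m) → ℂ) :
    Matrix.reindex finSumFinEquiv finSumFinEquiv (diagonal (v ∘ finSumFinEquiv)) = diagonal v := by
  rw [reindex_apply, submatrix_diagonal_equiv]
  have hfun : ((v ∘ ⇑finSumFinEquiv) ∘ ⇑finSumFinEquiv.symm) = v := by
    funext k
    show v (finSumFinEquiv (finSumFinEquiv.symm k)) = v k
    rw [Equiv.apply_symm_apply]
  rw [hfun]

lemma bigU_mem (hu : u ∈ Matrix.unitaryGroup (Fin m) ℂ) :
    bigU u ∈ Matrix.unitaryGroup (Fin (m + m)) ℂ := by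
  have h2 : star u * u = 1 := Matrix.mem_unitaryGroup_iff'.mp hu
  rw [Matrix.mem_unitaryGroup_iff']
  rw [bigU, star_reindex, reindex_mul]
  have h : star (fromBlocks u 0 0 u) * fromBlocks u 0 0 u = 1 := by
    rw [star_eq_conjTranspose, fromBlocks_conjTranspose]
    rw [fromBlocks_multiply]
    simp [h2, ← star_eq_conjTranspose, fromBlocks_one]
  rw [h]
  simp [reindex_apply, submatrix_one_equiv]

lemma dsum_zconj (β γ : Fin m → ℝ) :
    dsum (zconj u (fun i => (β i : ℂ))) (zconj u (fun i => (γ i : ℂ)))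
      = zconj (bigU u) (fun k => ((Sum.elim β γ (finSumFinEquiv.symm k) : ℝ) : ℂ)) := by
  simp only [zconj, dsum, bigU]
  rw [star_reindex,
    ← reindex_diagonal (fun k => ((Sum.elim β γ (finSumFinEquiv.symm k) : ℝ) : ℂ)),
    reindex_mul, reindex_mul]
  congr 1
  have hfun : ((fun k => ((Sum.elim β γ (finSumFinEquiv.symm k) : ℝ) : ℂ))
      ∘ ⇑finSumFinEquiv) = Sum.elim (fun i => ((β i : ℝ) : ℂ)) (fun i => ((γ i : ℝ) : ℂ)) := by
    funext k
    simp only [Function.comp_apply, Equiv.symm_apply_apply]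
    rcases k with k | k <;> simp
  have hdiag : (diagonal ((fun k => ((Sum.elim β γ (finSumFinEquiv.symm k) : ℝ) : ℂ))
      ∘ finSumFinEquiv) : Matrix (Fin m ⊕ Fin m) (Fin m ⊕ Fin m) ℂ)
      = fromBlocks (diagonal (fun i => (β i : ℂ))) 0 0 (diagonal (fun i => (γ i : ℂ))) := by
    rw [hfun, ← fromBlocks_diagonal]
  rw [hdiag]
  simp only [star_eq_conjTranspose, fromBlocks_conjTranspose, fromBlocks_multiply]
  simp [Matrix.mul_assoc]

end bigU

/-! ### Normality gives commutation -/

lemma commute_of_normal {n : ℕ} {A A₁ A₂ : Matrix (Fin n) (Fin n) ℂ}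
    (h1 : A₁.IsHermitian) (h2 : A₂.IsHermitian) (hA : A = A₁ + Complex.I • A₂)
    (hN : Aᴴ * A = A * Aᴴ) : A₁ * A₂ = A₂ * A₁ := by
  have hst : (A₁ + Complex.I • A₂)ᴴ = A₁ - Complex.I • A₂ := by
    rw [conjTranspose_add, conjTranspose_smul, h1.eq, h2.eq, Complex.star_def,
      Complex.conj_I, neg_smul, sub_eq_add_neg]
  rw [hA, hst] at hN
  have key : (2 * Complex.I) • (A₁ * A₂ - A₂ * A₁) = 0 := by
    have h0 : (A₁ - Complex.I • A₂) * (A₁ + Complex.I • A₂)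
        - (A₁ + Complex.I • A₂) * (A₁ - Complex.I • A₂) = 0 := sub_eq_zero.mpr hN
    rw [← h0]
    simp only [Matrix.mul_add, Matrix.add_mul, Matrix.mul_sub, Matrix.sub_mul,
      Matrix.smul_mul, Matrix.mul_smul, smul_smul, smul_sub, smul_add, two_mul, add_smul]
    abel
  have h2I : (2 * Complex.I) ≠ 0 := by
    simp [Complex.I_ne_zero]
  have hz := (smul_eq_zero.mp key).resolve_left h2I
  exact sub_eq_zero.mp hz

end SV

/-- Let `A = A₁ + iA₂` be a normal `n×n` complex matrix (Cartesian decomposition) with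
`-A₂ ≤ A₁` in the Loewner order. Then for every index `j`,
`s_j(A) ≤ s_j(2(A₁⁺ + A₂⁺) ⊕ (A₁ + A₂))`. -/
theorem stmt_8 {n : ℕ} (A A₁ A₂ : Matrix (Fin n) (Fin n) ℂ)
    (h1 : A₁.IsHermitian) (h2 : A₂.IsHermitian) (hA : A = A₁ + Complex.I • A₂)
    (hN : Aᴴ * A = A * Aᴴ) (hle : (A₁ - (-A₂)).PosSemidef) (j : Fin n) :
    singularValues A j ≤
      singularValues (dsum ((2 : ℂ) • (matPosPart A₁ + matPosPart A₂)) (A₁ + A₂))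
        (Fin.castAdd n j) := by
  classical
  open SV in
  have hcomm := SV.commute_of_normal h1 h2 hA hN
  obtain ⟨U, a, b, hA₁0, hA₂0⟩ := SV.simul_diag h1 h2 hcomm
  set u : Matrix (Fin n) (Fin n) ℂ := (U : Matrix (Fin n) (Fin n) ℂ) with hudef
  have hu : u ∈ Matrix.unitaryGroup (Fin n) ℂ := U.2
  have hA₁ : A₁ = SV.zconj u (fun i => (a i : ℂ)) := hA₁0
  have hA₂ : A₂ = SV.zconj u (fun i => (b i : ℂ)) := hA₂0
  -- the Loewner condition gives the eigenvalue condition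
  have hab : ∀ i, 0 ≤ a i + b i := by
    have hC : A₁ - (-A₂) = SV.zconj u (fun i => ((a i + b i : ℝ) : ℂ)) := by
      have harg : ((fun i => ((a i : ℝ) : ℂ)) + fun i => ((b i : ℝ) : ℂ))
          = fun i => ((a i + b i : ℝ) : ℂ) := by
        funext i
        push_cast
        rfl
      rw [sub_neg_eq_add, hA₁, hA₂, SV.zconj_add, harg]
    intro i
    have h := (SV.zconj_posSemidef_iff u hu _).mp (hC ▸ hle) i
    rwa [Complex.zero_le_real] at h
  -- eigenvalues of AᴴA
  set dA : Fin n → ℝ := fun i => a i ^ 2 + b i ^ 2 with hdA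
  have hAcA : Aᴴ * A = SV.zconj u (fun i => (dA i : ℂ)) := by
    have hAz : A = SV.zconj u (fun i => (a i : ℂ) + Complex.I * b i) := by
      have harg : ((fun i => ((a i : ℝ) : ℂ)) + Complex.I • fun i => ((b i : ℝ) : ℂ))
          = fun i => (a i : ℂ) + Complex.I * b i := by
        funext i
        simp [Pi.smul_apply, smul_eq_mul]
      rw [hA, hA₁, hA₂, SV.zconj_smul, SV.zconj_add, harg]
    rw [hAz, SV.zconj_star, SV.zconj_mul u hu]
    have harg2 : ((star fun i => (a i : ℂ) + Complex.I * b i) *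
        fun i => (a i : ℂ) + Complex.I * b i) = fun i => (dA i : ℂ) := by
      funext i
      simp only [Pi.mul_apply, Pi.star_apply, Complex.star_def, map_add, _root_.map_mul,
        Complex.conj_ofReal, Complex.conj_I, hdA]
      push_cast
      ring_nf
      rw [Complex.I_sq]
      ring
    rw [harg2]
  have hmA : Finset.univ.val.map (Matrix.isHermitian_conjTranspose_mul_self A).eigenvalues
      = Finset.univ.val.map dA :=
    SV.eigenvalues_multiset_eq _ u hu dA hAcA
  -- structure of the right-hand block matrix
  set β : Fin n → ℝ := fun i => (|a i| + a i) + (|b i| + b i) with hβ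
  set γ : Fin n → ℝ := fun i => a i + b i with hγ
  have hBz : (2 : ℂ) • (matPosPart A₁ + matPosPart A₂) = SV.zconj u (fun i => (β i : ℂ)) := by
    rw [hA₁, hA₂, SV.zconj_matPosPart u hu, SV.zconj_matPosPart u hu, SV.zconj_add,
      SV.zconj_smul]
    have harg : (2 : ℂ) • ((fun i => (((|a i| + a i) / 2 : ℝ) : ℂ))
        + fun i => (((|b i| + b i) / 2 : ℝ) : ℂ)) = fun i => ((β i : ℝ) : ℂ) := by
      funext i
      simp only [Pi.smul_apply, Pi.add_apply, smul_eq_mul, hβ]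
      push_cast
      ring
    rw [harg]
  have hCz : A₁ + A₂ = SV.zconj u (fun i => (γ i : ℂ)) := by
    have harg : ((fun i => ((a i : ℝ) : ℂ)) + fun i => ((b i : ℝ) : ℂ))
        = fun i => ((γ i : ℝ) : ℂ) := by
      funext i
      simp only [Pi.add_apply, hγ]
      push_cast
      rfl
    rw [hA₁, hA₂, SV.zconj_add, harg]
  set w : Fin (n + n) → ℝ := fun k => Sum.elim β γ (finSumFinEquiv.symm k) with hw
  have hMz : dsum ((2 : ℂ) • (matPosPart A₁ + matPosPart A₂)) (A₁ + A₂)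
      = SV.zconj (SV.bigU u) (fun k => (w k : ℂ)) := by
    rw [hBz, hCz]
    exact SV.dsum_zconj u β γ
  have hWu : SV.bigU u ∈ Matrix.unitaryGroup (Fin (n + n)) ℂ := SV.bigU_mem u hu
  have hMM : (dsum ((2 : ℂ) • (matPosPart A₁ + matPosPart A₂)) (A₁ + A₂))ᴴ
      * dsum ((2 : ℂ) • (matPosPart A₁ + matPosPart A₂)) (A₁ + A₂)
      = SV.zconj (SV.bigU u) (fun k => ((w k * w k : ℝ) : ℂ)) := by
    rw [hMz, SV.zconj_star, SV.zconj_mul _ hWu]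
    have harg : ((star fun k => ((w k : ℝ) : ℂ)) * fun k => ((w k : ℝ) : ℂ))
        = fun k => ((w k * w k : ℝ) : ℂ) := by
      funext k
      simp only [Pi.mul_apply, Pi.star_apply, Complex.star_def, Complex.conj_ofReal]
      push_cast
      ring
    rw [harg]
  have hmM : Finset.univ.val.map (Matrix.isHermitian_conjTranspose_mul_self
        (dsum ((2 : ℂ) • (matPosPart A₁ + matPosPart A₂)) (A₁ + A₂))).eigenvalues
      = Finset.univ.val.map (fun k => w k * w k) :=
    SV.eigenvalues_multiset_eq _ (SV.bigU u) hWu _ hMM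
  -- the pointwise eigenvalue inequality
  have hkey : ∀ i, dA i ≤ β i * β i := by
    intro i
    have h := hab i
    rcases le_or_gt (a i) 0 with ha | ha <;> rcases le_or_gt (b i) 0 with hb | hb
    · have ha0 : a i = 0 := le_antisymm ha (by linarith)
      have hb0 : b i = 0 := le_antisymm hb (by linarith)
      simp [hdA, hβ, ha0, hb0]
    · have : |a i| = -(a i) := abs_of_nonpos ha
      have : |b i| = b i := abs_of_pos hb
      simp only [hdA, hβ, abs_of_nonpos ha, abs_of_pos hb]
      nlinarith [abs_nonneg (a i)]
    · simp only [hdA, hβ, abs_of_pos ha, abs_of_nonpos hb]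
      nlinarith
    · simp only [hdA, hβ, abs_of_pos ha, abs_of_pos hb]
      nlinarith
  -- assemble
  unfold singularValues
  apply Real.sqrt_le_sqrt
  set eigsA := (Matrix.isHermitian_conjTranspose_mul_self A).eigenvalues with heigsA
  set eigsM := (Matrix.isHermitian_conjTranspose_mul_self
    (dsum ((2 : ℂ) • (matPosPart A₁ + matPosPart A₂)) (A₁ + A₂))).eigenvalues with heigsM
  set t := eigsA (Tuple.sort eigsA j.rev) with ht
  have step1 : (j : ℕ) < SV.nge eigsA t := (SV.le_sort_rev_iff eigsA j t).mp le_rfl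
  have e1 : SV.nge eigsA t = SV.nge dA t := SV.nge_eq_of_multiset_eq _ _ hmA t
  have e2 : SV.nge dA t ≤ SV.nge (fun i => β i * β i) t :=
    SV.nge_mono_pointwise _ _ hkey t
  have e3 : SV.nge (fun i => β i * β i) t ≤ SV.nge (fun k => w k * w k) t := by
    apply SV.nge_le_of_embed _ _ (Fin.castAdd n)
    · intro i k hik
      exact Fin.ext (by simpa using congrArg Fin.val hik)
    · intro i
      have hinl : finSumFinEquiv.symm (Fin.castAdd n i) = Sum.inl i := by
        rw [← finSumFinEquiv_apply_left, Equiv.symm_apply_apply]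
      simp only [hw, hinl, Sum.elim_inl]
  have e4 : SV.nge (fun k => w k * w k) t = SV.nge eigsM t :=
    (SV.nge_eq_of_multiset_eq _ _ hmM t).symm
  have step2 : ((Fin.castAdd n j : Fin (n + n)) : ℕ) < SV.nge eigsM t := by
    rw [Fin.coe_castAdd]
    omega
  exact (SV.le_sort_rev_iff eigsM (Fin.castAdd n j) t).mpr step2
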